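/- Let d ≥ 1, 1 < β₁ ≤ ⋯ ≤ β_d, functions ψ_i : ℕ → (0,1], a dimension function f, and for n define s_n and A_n, K_{n,1}, K_{n,2} as in the convergence criterion. Suppose m with 0 ≤ m ≤ d−1 is the smallest integer such that (s_n ∏_{i=1}^m ψ_i(n)^{-1} ∏_{i=1}^d β_i^n)^{1/(k_j−m)} ≥ ψ_{m+1}(n), where k_j satisfies k_{j−1} ≤ m < k_j for the grouping 0 = k_0 ≤ k_1 < ⋯ < k_s = d with β_{k_j} < β_{k_j+1} = ⋯ = β_{k_{j+1}} < β_{k_{j+1}+1}. Then the quantities (s_n ∏_{i=1}^ℓ ψ_i(n)^{-1} ∏_{i=1}^d β_i^n)^{1/(k_j−ℓ)} are nondecreasing as ℓ decreases from m to k_{j−1}; i.e. (s_n ∏_{i=1}^m ψ_i(n)^{-1} ∏_{i=1}^d β_i^n)^{1/(k_j−m)} ≤ ⋯ ≤ (s_n ∏_{i=1}^{k_{j−1}} ψ_i(n)^{-1} ∏_{i=1}^d β_i^n)^{1/(k_j−k_{j−1})}. -/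

import Mathlib

open MeasureTheory Set
open scoped Classical Topology BigOperators ENNReal

/-- The β-transformation `x ↦ βx (mod 1)` on `[0,1)`. -/
noncomputable def Tb (β : ℝ) : ℝ → ℝ := fun x => Int.fract (β * x)

/-- The k-th digit (0-indexed) of the β-expansion of x. -/
noncomputable def bdigit (β : ℝ) (k : ℕ) (x : ℝ) : ℤ := ⌊β * (Tb β)^[k] x⌋

/-- The cylinder of points of `[0,1)` whose β-expansion starts with ε. -/
def cylinder (β : ℝ) (n : ℕ) (ε : Fin n → ℤ) : Set ℝ :=
  {x | x ∈ Set.Ico (0:ℝ) 1 ∧ ∀ k : Fin n, bdigit β k x = ε k}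

/-- ε is β-admissible iff its cylinder is nonempty. -/
def BAdmissible (β : ℝ) (n : ℕ) (ε : Fin n → ℤ) : Prop :=
  (cylinder β n ε).Nonempty

/-- ε is full iff it is admissible and its cylinder has maximal length β^(-n). -/
def IsFull (β : ℝ) (n : ℕ) (ε : Fin n → ℤ) : Prop :=
  BAdmissible β n ε ∧ volume (cylinder β n ε) = ENNReal.ofReal (β ^ (-(n:ℤ)))

/-- The finite set A_n = {β_i^{-n}, β_i^{-n}ψ_i(n)} indexed by Fin d ⊕ Fin d. -/
noncomputable def tauSet (d : ℕ) (β : Fin d → ℝ) (ψ : Fin d → ℕ → ℝ) (n : ℕ) :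
    Fin d ⊕ Fin d → ℝ :=
  Sum.elim (fun i => β i ^ (-(n:ℤ))) (fun i => β i ^ (-(n:ℤ)) * ψ i n)

/-- The quantity f(τ) ∏_{i ∈ K_{n,1}(τ)} β_i^{-n}/τ ∏_{i ∈ K_{n,2}(τ)} β_i^{-n}ψ_i(n)/τ,
with K_{n,1}(τ) = {i : β_i^{-n} ≤ τ} and K_{n,2}(τ) = {i : β_i^{-n}ψ_i(n) ≥ τ}. -/
noncomputable def snTerm (d : ℕ) (β : Fin d → ℝ) (ψ : Fin d → ℕ → ℝ) (f : ℝ → ℝ)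
    (n : ℕ) (τ : ℝ) : ℝ :=
  f τ * (∏ i ∈ Finset.univ.filter (fun i : Fin d => β i ^ (-(n:ℤ)) ≤ τ),
      (β i ^ (-(n:ℤ)) / τ)) *
    ∏ i ∈ Finset.univ.filter (fun i : Fin d => τ ≤ β i ^ (-(n:ℤ)) * ψ i n),
      (β i ^ (-(n:ℤ)) * ψ i n / τ)

/-- s_n(Ψ,f) = min_{τ ∈ A_n} snTerm. -/
noncomputable def snval (d : ℕ) (β : Fin d → ℝ) (ψ : Fin d → ℕ → ℝ) (f : ℝ → ℝ)
    (n : ℕ) : ℝ :=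
  ⨅ t : Fin d ⊕ Fin d, snTerm d β ψ f n (tauSet d β ψ n t)

/-- Lemma 4.2: with a = k_{j−1}, b = k_j, Q(ℓ) = s_n ∏_{i=1}^ℓ ψ_i(n)^{-1} ∏_{i=1}^d β_i^n,
and m the smallest integer with Q(m)^{1/(b−m)} ≥ ψ_{m+1}(n), the quantities
Q(ℓ)^{1/(b−ℓ)} are nondecreasing as ℓ decreases from m to a:
Q(m)^{1/(b−m)} ≤ ⋯ ≤ Q(a)^{1/(b−a)}. -/
theorem stmt19 (d : ℕ) (hd : 1 ≤ d) (β : Fin d → ℝ) (hβ : ∀ i, 1 < β i)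
    (hβmono : Monotone β)
    (ψ : Fin d → ℕ → ℝ) (hψ : ∀ i n, 0 < ψ i n) (hψ1 : ∀ i n, ψ i n ≤ 1)
    (f : ℝ → ℝ) (hf_cont : Continuous f) (hf_mono : Monotone f) (hf0 : f 0 = 0)
    (n : ℕ) (a b m : ℕ) (ham : a ≤ m) (hmb : m < b) (hbd : b ≤ d)
    (Q : ℕ → ℝ)
    (hQ : ∀ ℓ : ℕ, Q ℓ = snval d β ψ f n *
      (∏ i ∈ Finset.univ.filter (fun i : Fin d => (i:ℕ) < ℓ), (ψ i n)⁻¹) *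
      ∏ i, β i ^ n)
    (hmin : ∀ ℓ : ℕ, a ≤ ℓ → ℓ < m → ∀ i : Fin d, (i:ℕ) = ℓ →
      Q ℓ ^ (((b:ℝ) - ℓ)⁻¹) < ψ i n)
    (hdef : ∀ i : Fin d, (i:ℕ) = m → ψ i n ≤ Q m ^ (((b:ℝ) - m)⁻¹)) :
    ∀ ℓ ℓ' : ℕ, a ≤ ℓ → ℓ ≤ ℓ' → ℓ' ≤ m →
      Q ℓ' ^ (((b:ℝ) - ℓ')⁻¹) ≤ Q ℓ ^ (((b:ℝ) - ℓ)⁻¹) := by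
  -- snval is nonnegative
  have hsnn : 0 ≤ snval d β ψ f n := by
    apply Real.iInf_nonneg
    intro t
    have hτ : 0 < tauSet d β ψ n t := by
      rcases t with i | i <;> simp only [tauSet, Sum.elim_inl, Sum.elim_inr]
      · exact zpow_pos (lt_trans one_pos (hβ i)) _
      · exact mul_pos (zpow_pos (lt_trans one_pos (hβ i)) _) (hψ i n)
    have hfτ : 0 ≤ f (tauSet d β ψ n t) := hf0 ▸ hf_mono hτ.le
    refine mul_nonneg (mul_nonneg hfτ (Finset.prod_nonneg fun i _ => ?_))
      (Finset.prod_nonneg fun i _ => ?_)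
    · exact div_nonneg (zpow_pos (lt_trans one_pos (hβ i)) _).le hτ.le
    · exact div_nonneg (mul_pos (zpow_pos (lt_trans one_pos (hβ i)) _) (hψ i n)).le hτ.le
  rcases eq_or_lt_of_le hsnn with hs0 | hspos
  · -- degenerate case s = 0 : all Q ℓ = 0
    have hQ0 : ∀ ℓ, Q ℓ = 0 := fun ℓ => by rw [hQ ℓ, ← hs0]; ring
    intro ℓ ℓ' hℓ hℓℓ' hℓ'm
    have h1 : ((b:ℝ) - ℓ')⁻¹ ≠ 0 := by
      refine inv_ne_zero (ne_of_gt (sub_pos.2 ?_))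
      exact_mod_cast lt_of_le_of_lt hℓ'm hmb
    have h2 : ((b:ℝ) - ℓ)⁻¹ ≠ 0 := by
      refine inv_ne_zero (ne_of_gt (sub_pos.2 ?_))
      exact_mod_cast lt_of_le_of_lt (le_trans hℓℓ' hℓ'm) hmb
    rw [hQ0, hQ0, Real.zero_rpow h1, Real.zero_rpow h2]
  · -- positive case
    have hQpos : ∀ ℓ, 0 < Q ℓ := by
      intro ℓ
      rw [hQ ℓ]
      refine mul_pos (mul_pos hspos (Finset.prod_pos fun i _ => inv_pos.2 (hψ i n)))
        (Finset.prod_pos fun i _ => pow_pos (lt_trans one_pos (hβ i)) _)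
    -- one step
    have step : ∀ ℓ : ℕ, a ≤ ℓ → ℓ < m →
        Q (ℓ+1) ^ (((b:ℝ) - (ℓ+1:ℕ))⁻¹) ≤ Q ℓ ^ (((b:ℝ) - ℓ)⁻¹) := by
      intro ℓ hℓa hℓm
      have hℓd : ℓ < d := lt_of_lt_of_le (lt_trans hℓm hmb) hbd
      set i : Fin d := ⟨ℓ, hℓd⟩
      have hψi : Q ℓ ^ (((b:ℝ) - ℓ)⁻¹) < ψ i n := hmin ℓ hℓa hℓm i rfl
      -- Q (ℓ+1) = Q ℓ * (ψ i n)⁻¹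
      have hfil : Finset.univ.filter (fun j : Fin d => (j:ℕ) < ℓ+1)
          = insert i (Finset.univ.filter (fun j : Fin d => (j:ℕ) < ℓ)) := by
        ext j
        simp only [Finset.mem_filter, Finset.mem_univ, true_and, Finset.mem_insert,
          Nat.lt_succ_iff_lt_or_eq]
        constructor
        · rintro (h | h)
          · exact Or.inr h
          · exact Or.inl (Fin.ext h)
        · rintro (h | h)
          · exact Or.inr (by rw [h])
          · exact Or.inl h
      have hrel : Q (ℓ+1) = Q ℓ * (ψ i n)⁻¹ := by
        rw [hQ, hQ, hfil, Finset.prod_insert (by simp [i])]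
        ring
      have hp : (0:ℝ) < (b:ℝ) - ℓ := by
        have : ℓ < b := lt_trans hℓm hmb
        exact sub_pos.2 (by exact_mod_cast this)
      have hq : (0:ℝ) < (b:ℝ) - (ℓ+1:ℕ) := by
        have : ℓ + 1 < b := lt_of_le_of_lt hℓm hmb
        exact sub_pos.2 (by exact_mod_cast this)
      set c : ℝ := Q ℓ ^ (((b:ℝ) - ℓ)⁻¹) with hc
      have hcpos : 0 < c := Real.rpow_pos_of_pos (hQpos ℓ) _
      have hx : Q ℓ = c ^ ((b:ℝ) - ℓ) := by
        rw [hc, ← Real.rpow_mul (hQpos ℓ).le, inv_mul_cancel₀ (ne_of_gt hp), Real.rpow_one]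
      have key : Q (ℓ+1) ≤ c ^ ((b:ℝ) - (ℓ+1:ℕ)) := by
        rw [hrel]
        have h1 : Q ℓ * (ψ i n)⁻¹ ≤ Q ℓ * c⁻¹ := by
          apply mul_le_mul_of_nonneg_left _ (hQpos ℓ).le
          exact inv_anti₀ hcpos hψi.le
        refine le_trans h1 ?_
        rw [hx, ← Real.rpow_neg_one c, ← Real.rpow_add hcpos]
        apply le_of_eq
        congr 1
        push_cast
        ring
      calc Q (ℓ+1) ^ (((b:ℝ) - (ℓ+1:ℕ))⁻¹)
          ≤ (c ^ ((b:ℝ) - (ℓ+1:ℕ))) ^ (((b:ℝ) - (ℓ+1:ℕ))⁻¹) :=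
            Real.rpow_le_rpow (hQpos _).le key (inv_pos.2 hq).le
        _ = c := by
            rw [← Real.rpow_mul hcpos.le, mul_inv_cancel₀ (ne_of_gt hq), Real.rpow_one]
    -- induction
    intro ℓ ℓ' hℓ hℓℓ' hℓ'm
    induction ℓ' , hℓℓ' using Nat.le_induction with
    | base => exact le_refl _
    | succ k hk ih =>
        have hkm : k < m := Nat.lt_of_succ_le hℓ'm
        exact le_trans (step k (le_trans hℓ hk) hkm) (ih hkm.le)
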